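/- Let λ: G_m^n → G_m^n be an isogeny of the complex algebraic torus (i.e., a surjective group homomorphism with finite kernel), and let T ⊂ G_m^n be a subtorus. Then the following are equivalent: (1) there exists a subtorus T' ⊂ G_m^n such that λ restricts to an isomorphism T' → T; (2) the preimage λ^{-1}(T) is a disjoint union of deg(λ) distinct torsion cosets of a subtorus. -/

import Mathlib

open scoped Pointwise


/-- The monomial (algebraic) group homomorphism `G_m^k → G_m^n` attached to an integer
matrix `A`. -/
noncomputable def monomialHom {n k : ℕ} (A : Matrix (Fin n) (Fin k) ℤ) :
    (Fin k → ℂˣ) →* (Fin n → ℂˣ) where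
  toFun t := fun i => ∏ j, t j ^ A i j
  map_one' := by funext i; simp
  map_mul' x y := by funext i; simp [mul_zpow, Finset.prod_mul_distrib]


section helpers

lemma zpow_fsum {G : Type*} [CommGroup G] (x : G) {ι : Type*} (s : Finset ι) (f : ι → ℤ) :
    x ^ (∑ i ∈ s, f i) = ∏ i ∈ s, x ^ f i := by
  classical
  induction s using Finset.induction with
  | empty => simp
  | insert _ _ h ih => rw [Finset.sum_insert h, Finset.prod_insert h, zpow_add, ih]

lemma monomialHom_apply {n k : ℕ} (A : Matrix (Fin n) (Fin k) ℤ) (t : Fin k → ℂˣ) (i : Fin n) :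
    monomialHom A t i = ∏ j, t j ^ A i j := rfl

lemma monomialHom_mul {n k l : ℕ} (A : Matrix (Fin n) (Fin k) ℤ) (B : Matrix (Fin k) (Fin l) ℤ)
    (t : Fin l → ℂˣ) : monomialHom (A * B) t = monomialHom A (monomialHom B t) := by
  funext i
  simp only [monomialHom_apply, Matrix.mul_apply]
  calc ∏ l', t l' ^ (∑ j, A i j * B j l')
      = ∏ l', ∏ j, t l' ^ (A i j * B j l') := by
        exact Finset.prod_congr rfl fun l' _ => zpow_fsum _ _ _
    _ = ∏ j, ∏ l', t l' ^ (A i j * B j l') := Finset.prod_comm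
    _ = ∏ j, (∏ l', t l' ^ B j l') ^ A i j := by
        refine Finset.prod_congr rfl fun j _ => ?_
        rw [← Finset.prod_zpow]
        exact Finset.prod_congr rfl fun l' _ => by rw [mul_comm, zpow_mul]

lemma monomialHom_smul_one {n : ℕ} (d : ℤ) (t : Fin n → ℂˣ) (i : Fin n) :
    monomialHom (d • (1 : Matrix (Fin n) (Fin n) ℤ)) t i = t i ^ d := by
  simp only [monomialHom_apply, Matrix.smul_apply, smul_eq_mul]
  rw [Finset.prod_eq_single i]
  · rw [Matrix.one_apply_eq, mul_one]
  · intro j _ hj; rw [Matrix.one_apply_ne' hj, mul_zero, zpow_zero]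
  · intro h; exact absurd (Finset.mem_univ i) h

lemma exists_pow_root (w : ℂˣ) {d : ℕ} (hd : 0 < d) : ∃ z : ℂˣ, z ^ d = w := by
  obtain ⟨z, hz⟩ := IsAlgClosed.exists_pow_nat_eq (w : ℂ) hd
  have hz0 : z ≠ 0 := by
    rintro rfl
    rw [zero_pow hd.ne'] at hz
    exact w.ne_zero hz.symm
  exact ⟨Units.mk0 z hz0, by ext; simp [hz]⟩

lemma exists_zpow_root (w : ℂˣ) {d : ℤ} (hd : d ≠ 0) : ∃ z : ℂˣ, z ^ d = w := by
  obtain ⟨z, hz⟩ := exists_pow_root w (Int.natAbs_pos.mpr hd)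
  rcases Int.natAbs_eq d with h | h
  · exact ⟨z, by rw [h, zpow_natCast, hz]⟩
  · refine ⟨z⁻¹, ?_⟩
    rw [h, zpow_neg, zpow_natCast, inv_pow, inv_inv, hz]


lemma monomialHom_surjective {n : ℕ} (M : Matrix (Fin n) (Fin n) ℤ) (hM : M.det ≠ 0) :
    Function.Surjective (monomialHom M) := by
  intro y
  choose s hs using fun i => exists_zpow_root (y i) hM
  refine ⟨monomialHom M.adjugate s, ?_⟩
  rw [← monomialHom_mul, Matrix.mul_adjugate]
  funext i
  rw [monomialHom_smul_one]
  exact hs i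

lemma ker_pow_eq_one {n : ℕ} {M : Matrix (Fin n) (Fin n) ℤ} {t : Fin n → ℂˣ}
    (ht : monomialHom M t = 1) (i : Fin n) : t i ^ M.det = 1 := by
  have h : monomialHom (M.adjugate * M) t = 1 := by
    rw [monomialHom_mul, ht, map_one]
  rw [Matrix.adjugate_mul] at h
  have := congrFun h i
  rwa [monomialHom_smul_one] at this

lemma ker_torsion {n : ℕ} {M : Matrix (Fin n) (Fin n) ℤ} {t : Fin n → ℂˣ}
    (ht : monomialHom M t = 1) : t ^ M.det.natAbs = 1 :=
  funext fun i => pow_natAbs_eq_one.mpr (ker_pow_eq_one ht i)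

lemma ker_finite {n : ℕ} (M : Matrix (Fin n) (Fin n) ℤ) (hM : M.det ≠ 0) :
    (((monomialHom M).ker : Set (Fin n → ℂˣ))).Finite := by
  have hd : M.det.natAbs ≠ 0 := Int.natAbs_ne_zero.mpr hM
  haveI : NeZero M.det.natAbs := ⟨hd⟩
  have h1 : ({z : ℂˣ | z ^ M.det.natAbs = 1} : Set ℂˣ).Finite := by
    have he : {z : ℂˣ | z ^ M.det.natAbs = 1} = ↑(rootsOfUnity M.det.natAbs ℂ) := by
      ext z; simp [mem_rootsOfUnity]
    rw [he]
    haveI : Finite ↥((rootsOfUnity M.det.natAbs ℂ : Subgroup ℂˣ) : Set ℂˣ) :=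
      inferInstanceAs (Finite (rootsOfUnity M.det.natAbs ℂ))
    exact Set.toFinite _
  apply Set.Finite.subset (Set.Finite.pi fun _ : Fin n => h1)
  intro t ht
  have ht' : monomialHom M t = 1 := ht
  have := ker_torsion ht'
  intro i _
  exact congrFun this i

end helpers

/-- A subgroup of `(ℂ^×)^n` is a subtorus if it is the image of some monomial map. -/
def IsSubtorus {n : ℕ} (T : Subgroup (Fin n → ℂˣ)) : Prop :=
  ∃ (k : ℕ) (A : Matrix (Fin n) (Fin k) ℤ), T = (monomialHom A).range

/-- A torsion coset: a translate of a subtorus by a torsion point. -/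
def IsTorsionCoset {n : ℕ} (s : Set (Fin n → ℂˣ)) : Prop :=
  ∃ (ζ : Fin n → ℂˣ) (T : Subgroup (Fin n → ℂˣ)), IsSubtorus T ∧
    (∃ k : ℕ, 0 < k ∧ ζ ^ k = 1) ∧ s = (fun x => ζ * x) '' (T : Set (Fin n → ℂˣ))

lemma subtorus_rootable {n : ℕ} {T : Subgroup (Fin n → ℂˣ)} (hT : IsSubtorus T) :
    ∀ x ∈ T, ∀ d : ℕ, 0 < d → ∃ y ∈ T, y ^ d = x := by
  obtain ⟨k, A, rfl⟩ := hT
  rintro x hx d hd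
  obtain ⟨t, rfl⟩ := hx
  choose s hs using fun j => exists_pow_root (t j) hd
  refine ⟨monomialHom A s, ⟨s, rfl⟩, ?_⟩
  rw [← map_pow]
  congr 1
  funext j
  exact hs j

lemma finiteIndex_eq_top {G : Type*} [CommGroup G]
    (hr : ∀ x : G, ∀ d : ℕ, 0 < d → ∃ y : G, y ^ d = x)
    (S : Subgroup G) (hS : S.FiniteIndex) : S = ⊤ := by
  rw [Subgroup.eq_top_iff']
  intro x
  obtain ⟨y, hy⟩ := hr x S.index (Nat.pos_of_ne_zero hS.index_ne_zero)
  exact hy ▸ S.pow_index_mem y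

lemma cover_lemma {G : Type*} [CommGroup G] (T' : Subgroup G)
    (hr : ∀ x ∈ T', ∀ d : ℕ, 0 < d → ∃ y ∈ T', y ^ d = x)
    {ι : Type*} [DecidableEq ι] (s : Finset ι) (Tf : ι → Subgroup G) (b : ι → G)
    (hcov : (T' : Set G) ⊆ ⋃ i ∈ s, (fun y => b i * y) '' (Tf i : Set G)) :
    ∃ i ∈ s, T' ≤ Tf i ∧ ∃ t ∈ T', t ∈ (fun y => b i * y) '' (Tf i : Set G) := by
  classical
  set S : ι → Subgroup ↥T' := fun i => (Tf i).comap T'.subtype with hS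
  set τ : ι → ↥T' := fun i =>
    if h : ∃ t : ↥T', (t : G) ∈ (fun y => b i * y) '' (Tf i : Set G) then h.choose else 1 with hτ
  set s' : Finset ι := s.filter
    (fun i => ∃ t : ↥T', (t : G) ∈ (fun y => b i * y) '' (Tf i : Set G)) with hs'
  have hcovers : ⋃ i ∈ s', τ i • (S i : Set ↥T') = Set.univ := by
    rw [Set.eq_univ_iff_forall]
    intro t
    have h0 : (t : G) ∈ ⋃ i ∈ s, (fun y => b i * y) '' (Tf i : Set G) := hcov t.2
    simp only [Set.mem_iUnion] at h0
    obtain ⟨i, hi, hti⟩ := h0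
    have hex : ∃ u : ↥T', (u : G) ∈ (fun y => b i * y) '' (Tf i : Set G) := ⟨t, hti⟩
    have hτi : ((τ i : ↥T') : G) ∈ (fun y => b i * y) '' (Tf i : Set G) := by
      rw [hτ]
      simp only [dif_pos hex]
      exact hex.choose_spec
    refine Set.mem_iUnion.mpr ⟨i, Set.mem_iUnion.mpr ⟨Finset.mem_filter.mpr ⟨hi, hex⟩, ?_⟩⟩
    rw [Set.mem_smul_set_iff_inv_smul_mem]
    obtain ⟨u, hu, hu'⟩ := hti
    obtain ⟨v, hv, hv'⟩ := hτi
    beta_reduce at hu' hv'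
    show (τ i)⁻¹ • t ∈ S i
    rw [hS]
    simp only [Subgroup.mem_comap, Subgroup.coe_subtype]
    have hco : (((τ i)⁻¹ • t : ↥T') : G) = v⁻¹ * u := by
      rw [smul_eq_mul]
      push_cast
      rw [← hu', ← hv']
      group
    rw [hco]
    exact mul_mem (inv_mem hv) hu
  obtain ⟨j, hj, hfin⟩ := Subgroup.exists_finiteIndex_of_leftCoset_cover hcovers
  rw [hs', Finset.mem_filter] at hj
  obtain ⟨hjs, t, htmem⟩ := hj
  have hr' : ∀ x : ↥T', ∀ d : ℕ, 0 < d → ∃ y : ↥T', y ^ d = x := by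
    intro x d hd
    obtain ⟨y, hy, hyd⟩ := hr x x.2 d hd
    exact ⟨⟨y, hy⟩, Subtype.ext (by simpa using hyd)⟩
  have htop : S j = ⊤ := finiteIndex_eq_top hr' (S j) hfin
  refine ⟨j, hjs, ?_, t, t.2, htmem⟩
  intro g hg
  have : (⟨g, hg⟩ : ↥T') ∈ S j := htop ▸ Subgroup.mem_top _
  exact Subgroup.mem_comap.mp this

lemma ker_card_toFinset {n : ℕ} {M : Matrix (Fin n) (Fin n) ℤ}
    (hfin : (((monomialHom M).ker : Set (Fin n → ℂˣ))).Finite) :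
    hfin.toFinset.card = Nat.card (monomialHom M).ker := by
  rw [← Set.ncard_eq_toFinset_card ((monomialHom M).ker : Set (Fin n → ℂˣ)) hfin,
    ← Nat.card_coe_set_eq]
  rfl

/-- For an isogeny `λ` of `G_m^n` (given by a nonsingular integer matrix `M`) and a
subtorus `T`, the following are equivalent: (1) `λ` restricts to an isomorphism from some
subtorus `T'` onto `T`; (2) `λ⁻¹(T)` is the disjoint union of `deg λ = #ker λ` distinct
torsion cosets. -/
theorem stmt_3 {n : ℕ} (M : Matrix (Fin n) (Fin n) ℤ) (hM : M.det ≠ 0)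
    (T : Subgroup (Fin n → ℂˣ)) (hT : IsSubtorus T) :
    (∃ T' : Subgroup (Fin n → ℂˣ), IsSubtorus T' ∧
        Set.BijOn (monomialHom M) (T' : Set (Fin n → ℂˣ)) (T : Set (Fin n → ℂˣ))) ↔
      (∃ C : Finset (Set (Fin n → ℂˣ)), C.card = Nat.card (monomialHom M).ker ∧
        (∀ s ∈ C, IsTorsionCoset s) ∧
        (∀ s ∈ C, ∀ s' ∈ C, s ≠ s' → Disjoint s s') ∧
        ⋃₀ (C : Set (Set (Fin n → ℂˣ))) =
          (monomialHom M) ⁻¹' (T : Set (Fin n → ℂˣ))) := by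
  classical
  have hdpos : 0 < M.det.natAbs := Int.natAbs_pos.mpr hM
  constructor
  · rintro ⟨T', hT'sub, hbij⟩
    have hfin := ker_finite M hM
    set Kfin := hfin.toFinset with hKfin
    have hmemK : ∀ ζ, ζ ∈ Kfin ↔ monomialHom M ζ = 1 := by
      intro ζ
      rw [hKfin, Set.Finite.mem_toFinset, SetLike.mem_coe, MonoidHom.mem_ker]
    set f : (Fin n → ℂˣ) → Set (Fin n → ℂˣ) := fun ζ => (fun x => ζ * x) '' (T' : Set _) with hf
    have hself : ∀ ζ, ζ ∈ f ζ := fun ζ => ⟨1, T'.one_mem, mul_one ζ⟩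
    have hinj : ∀ ζ ∈ Kfin, ∀ ζ' ∈ Kfin, ζ ∈ f ζ' → ζ = ζ' := by
      rintro ζ hζ ζ' hζ' ⟨t, ht, hmul⟩
      beta_reduce at hmul
      have h1 : monomialHom M t = 1 := by
        have h2 : monomialHom M (ζ' * t) = monomialHom M ζ := by rw [hmul]
        rw [map_mul, (hmemK ζ).mp hζ, (hmemK ζ').mp hζ', one_mul] at h2
        exact h2
      have ht1 : t = 1 := hbij.injOn ht T'.one_mem (by rw [h1, map_one])
      rw [ht1, mul_one] at hmul
      exact hmul.symm
    have hfInj : Set.InjOn f ↑Kfin := by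
      intro ζ hζ ζ' hζ' hff
      exact hinj ζ (by simpa using hζ) ζ' (by simpa using hζ') (hff ▸ hself ζ)
    refine ⟨Kfin.image f, ?_, ?_, ?_, ?_⟩
    · rw [Finset.card_image_of_injOn hfInj, ker_card_toFinset hfin]
    · rintro s hs
      obtain ⟨ζ, hζ, rfl⟩ := Finset.mem_image.mp hs
      exact ⟨ζ, T', hT'sub, ⟨M.det.natAbs, hdpos, ker_torsion ((hmemK ζ).mp hζ)⟩, rfl⟩
    · rintro s hs s' hs' hne
      obtain ⟨ζ, hζ, rfl⟩ := Finset.mem_image.mp hs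
      obtain ⟨ζ', hζ', rfl⟩ := Finset.mem_image.mp hs'
      rw [Set.disjoint_left]
      rintro x ⟨t, ht, rfl⟩ ⟨t', ht', hx⟩
      -- ζ' * t' = ζ * t
      have hζζ' : ζ ∈ f ζ' := by
        refine ⟨t' * t⁻¹, mul_mem ht' (inv_mem ht), ?_⟩
        have h3 : ζ' * t' = ζ * t := hx
        show ζ' * (t' * t⁻¹) = ζ
        rw [← mul_assoc, h3, mul_assoc, mul_inv_cancel, mul_one]
      exact hne (by rw [hinj ζ hζ ζ' hζ' hζζ'])
    · ext x
      simp only [Set.mem_sUnion, Finset.coe_image, Set.mem_image, Finset.mem_coe,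
        Set.mem_preimage, SetLike.mem_coe]
      constructor
      · rintro ⟨s, ⟨ζ, hζ, rfl⟩, t, ht, rfl⟩
        rw [map_mul, (hmemK ζ).mp hζ, one_mul]
        exact hbij.mapsTo ht
      · intro hx
        obtain ⟨t, ht, hlt⟩ := hbij.surjOn hx
        refine ⟨f (x * t⁻¹), ⟨x * t⁻¹, ?_, rfl⟩, t, ht, by show x * t⁻¹ * t = x; group⟩
        rw [hmemK, map_mul, map_inv, hlt, mul_inv_cancel]
  · rintro ⟨C, hcard, htors, hdisj, hunion⟩
    have hdata : ∀ P ∈ C, ∃ (ζ : Fin n → ℂˣ) (T₁ : Subgroup (Fin n → ℂˣ)), IsSubtorus T₁ ∧ (∃ k, 0 < k ∧ ζ ^ k = 1) ∧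
        P = (fun x => ζ * x) '' (T₁ : Set (Fin n → ℂˣ)) := htors
    choose! ζf Tf hTfsub htorsf hPf using hdata
    have hsurj := monomialHom_surjective M hM
    have hPsub : ∀ P ∈ C, P ⊆ (monomialHom M) ⁻¹' (T : Set (Fin n → ℂˣ)) := by
      intro P hP x hx
      rw [← hunion]
      exact ⟨P, hP, hx⟩
    have hζmem : ∀ P ∈ C, ζf P ∈ P := by
      intro P hP
      have h : ζf P ∈ (fun x => ζf P * x) '' ((Tf P : Subgroup _) : Set (Fin n → ℂˣ)) :=
        ⟨1, (Tf P).one_mem, by show ζf P * 1 = ζf P; rw [mul_one]⟩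
      rwa [← hPf P hP] at h
    have hζT : ∀ P ∈ C, monomialHom M (ζf P) ∈ T := fun P hP => hPsub P hP (hζmem P hP)
    have hTfT : ∀ P ∈ C, ∀ t ∈ Tf P, monomialHom M t ∈ T := by
      intro P hP t ht
      have h1 : monomialHom M (ζf P * t) ∈ T := by
        refine hPsub P hP ?_
        have h : ζf P * t ∈ (fun x => ζf P * x) '' ((Tf P : Subgroup _) : Set (Fin n → ℂˣ)) :=
          ⟨t, ht, rfl⟩
        rwa [← hPf P hP] at h
      have h2 := hζT P hP
      have h3 : monomialHom M t = (monomialHom M (ζf P))⁻¹ * monomialHom M (ζf P * t) := by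
        rw [map_mul]; group
      rw [h3]
      exact mul_mem (inv_mem h2) h1
    have hcovT : (T : Set (Fin n → ℂˣ)) ⊆
        ⋃ P ∈ C, (fun y => monomialHom M (ζf P) * y) ''
          (((Tf P).map (monomialHom M) : Subgroup _) : Set (Fin n → ℂˣ)) := by
      intro x hx
      obtain ⟨u, rfl⟩ := hsurj x
      have hu : u ∈ ⋃₀ (C : Set (Set (Fin n → ℂˣ))) := by rw [hunion]; exact hx
      obtain ⟨P, hP, huP⟩ := hu
      rw [hPf P hP] at huP
      obtain ⟨t, ht, rfl⟩ := huP
      refine Set.mem_biUnion hP ⟨monomialHom M t, Subgroup.mem_map_of_mem _ ht, ?_⟩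
      show monomialHom M (ζf P) * monomialHom M t = monomialHom M ((fun x => ζf P * x) t)
      show monomialHom M (ζf P) * monomialHom M t = monomialHom M (ζf P * t)
      rw [← map_mul]
    obtain ⟨P₀, hP₀, hTle, -⟩ := cover_lemma T (subtorus_rootable hT) C
      (fun P => (Tf P).map (monomialHom M)) (fun P => monomialHom M (ζf P)) hcovT
    have hsurjT : ∀ x ∈ T, ∃ t ∈ Tf P₀, monomialHom M t = x := by
      intro x hx
      obtain ⟨t, ht, rfl⟩ := Subgroup.mem_map.mp (hTle hx)
      exact ⟨t, ht, rfl⟩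
    have hcoset : ∀ x, monomialHom M x ∈ T →
        ∃ P ∈ C, (fun t => x * t) '' ((Tf P₀ : Subgroup _) : Set (Fin n → ℂˣ)) ⊆ P := by
      intro x hx
      have hcov2 : ((Tf P₀ : Subgroup _) : Set (Fin n → ℂˣ)) ⊆
          ⋃ P ∈ C, (fun y => (x⁻¹ * ζf P) * y) '' ((Tf P : Subgroup _) : Set (Fin n → ℂˣ)) := by
        intro t ht
        have hxt : x * t ∈ ⋃₀ (C : Set (Set (Fin n → ℂˣ))) := by
          rw [hunion]
          show monomialHom M (x * t) ∈ (T : Set _)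
          rw [map_mul]
          exact mul_mem hx (hTfT P₀ hP₀ t ht)
        obtain ⟨P, hP, hmem⟩ := hxt
        rw [hPf P hP] at hmem
        obtain ⟨u, hu, huv⟩ := hmem
        beta_reduce at huv
        refine Set.mem_biUnion hP ⟨u, hu, ?_⟩
        show x⁻¹ * ζf P * u = t
        rw [mul_assoc, huv, ← mul_assoc, inv_mul_cancel, one_mul]
      obtain ⟨P, hP, hle, t₀, ht₀T, ht₀⟩ := cover_lemma (Tf P₀)
        (subtorus_rootable (hTfsub P₀ hP₀)) C Tf (fun P => x⁻¹ * ζf P) hcov2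
      refine ⟨P, hP, ?_⟩
      rintro y ⟨t, ht, rfl⟩
      obtain ⟨u₀, hu₀, hu₀'⟩ := ht₀
      beta_reduce at hu₀'
      have hkey : ζf P * u₀ = x * t₀ := by
        rw [← hu₀']; group
      rw [hPf P hP]
      refine ⟨u₀ * (t₀⁻¹ * t), mul_mem hu₀ (mul_mem (inv_mem (hle ht₀T)) (hle ht)), ?_⟩
      show ζf P * (u₀ * (t₀⁻¹ * t)) = x * t
      rw [← mul_assoc, hkey]
      group
    have hpiece : ∀ P ∈ C, ∃ kp, monomialHom M kp = 1 ∧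
        (fun t => kp * t) '' ((Tf P₀ : Subgroup _) : Set (Fin n → ℂˣ)) ⊆ P := by
      intro P hP
      obtain ⟨P', hP', hsub⟩ := hcoset (ζf P) (hζT P hP)
      have hζP' : ζf P ∈ P' :=
        hsub ⟨1, (Tf P₀).one_mem, by show ζf P * 1 = ζf P; rw [mul_one]⟩
      have hPP' : P' = P := by
        by_contra hne'
        exact Set.disjoint_left.mp (hdisj P' hP' P hP hne') hζP' (hζmem P hP)
      obtain ⟨t, ht, hlt⟩ := hsurjT (monomialHom M (ζf P)) (hζT P hP)
      refine ⟨ζf P * t⁻¹, by rw [map_mul, map_inv, hlt, mul_inv_cancel], ?_⟩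
      have hsub' : (fun t => ζf P * t) '' ((Tf P₀ : Subgroup _) : Set (Fin n → ℂˣ)) ⊆ P :=
        hPP' ▸ hsub
      rintro y ⟨u, hu, rfl⟩
      apply hsub'
      refine ⟨t⁻¹ * u, mul_mem (inv_mem ht) hu, ?_⟩
      show ζf P * (t⁻¹ * u) = ζf P * t⁻¹ * u
      rw [mul_assoc]
    refine ⟨Tf P₀, hTfsub P₀ hP₀, fun t ht => hTfT P₀ hP₀ t ht, ?_, ?_⟩
    · -- InjOn
      intro a ha b hb hab
      by_contra hne
      set z := a * b⁻¹ with hz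
      have hzT : z ∈ Tf P₀ := mul_mem ha (inv_mem hb)
      have hzK : monomialHom M z = 1 := by
        rw [hz, map_mul, map_inv, hab, mul_inv_cancel]
      have hz1 : z ≠ 1 := by
        intro h
        rw [hz, mul_inv_eq_one] at h
        exact hne h
      have hfinK := ker_finite M hM
      have hzmem : z ∈ hfinK.toFinset := by
        rw [Set.Finite.mem_toFinset]
        exact hzK
      have h1mem : (1 : Fin n → ℂˣ) ∈ hfinK.toFinset.erase z := by
        rw [Finset.mem_erase]
        refine ⟨Ne.symm hz1, ?_⟩
        rw [Set.Finite.mem_toFinset]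
        exact (map_one (monomialHom M) : _)
      choose! kf hkf1 hkf2 using hpiece
      have him_eq : (fun t => z * t) '' ((Tf P₀ : Subgroup _) : Set (Fin n → ℂˣ)) =
          (fun t => (1 : Fin n → ℂˣ) * t) '' ((Tf P₀ : Subgroup _) : Set (Fin n → ℂˣ)) := by
        ext y
        constructor
        · rintro ⟨t, ht, rfl⟩
          exact ⟨z * t, mul_mem hzT ht, by show 1 * (z * t) = z * t; rw [one_mul]⟩
        · rintro ⟨t, ht, rfl⟩
          exact ⟨z⁻¹ * t, mul_mem (inv_mem hzT) ht, by show z * (z⁻¹ * t) = 1 * t; group⟩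
      have hcle : C.card ≤ ((hfinK.toFinset.erase z).image
          (fun k => (fun t => k * t) '' ((Tf P₀ : Subgroup _) : Set (Fin n → ℂˣ)))).card := by
        apply Finset.card_le_card_of_injOn
          (fun P => (fun t => kf P * t) '' ((Tf P₀ : Subgroup _) : Set (Fin n → ℂˣ)))
        · intro P hP
          rcases eq_or_ne (kf P) z with hk | hk
          · refine Finset.mem_image.mpr ⟨1, h1mem, ?_⟩
            rw [← him_eq, ← hk]
          · refine Finset.mem_image.mpr ⟨kf P, ?_, rfl⟩
            rw [Finset.mem_erase]
            refine ⟨hk, ?_⟩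
            rw [Set.Finite.mem_toFinset]
            exact hkf1 P hP
        · intro P hP P' hP' heq
          beta_reduce at heq
          by_contra hne'
          have hmP : kf P ∈ P := hkf2 P (by simpa using hP)
            ⟨1, (Tf P₀).one_mem, by show kf P * 1 = kf P; rw [mul_one]⟩
          have hmP' : kf P ∈ P' := hkf2 P' (by simpa using hP') (by
            rw [← heq]
            exact ⟨1, (Tf P₀).one_mem, by show kf P * 1 = kf P; rw [mul_one]⟩)
          exact Set.disjoint_left.mp (hdisj P (by simpa using hP) P' (by simpa using hP') hne')
            hmP hmP'
      have hle2 : ((hfinK.toFinset.erase z).image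
          (fun k => (fun t => k * t) '' ((Tf P₀ : Subgroup _) : Set (Fin n → ℂˣ)))).card ≤
          hfinK.toFinset.card - 1 := by
        refine le_trans Finset.card_image_le ?_
        rw [Finset.card_erase_of_mem hzmem]
      have hpos : 0 < hfinK.toFinset.card := Finset.card_pos.mpr ⟨z, hzmem⟩
      have hCeq : C.card = hfinK.toFinset.card := by
        rw [hcard, ker_card_toFinset hfinK]
      omega
    · -- SurjOn
      intro x hx
      obtain ⟨t, ht, hlt⟩ := hsurjT x hx
      exact ⟨t, ht, hlt⟩
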